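/- Let T_n = e·(n!)^(1/n) for integers n ≥ 1 and let σ_n = ⌊T_n⌋ − n + 1. If n ≥ 3 then 2 ≤ σ_n < n and the segment σ_{n−σ_n}, σ_{n−σ_n+1}, …, σ_n takes at most two values; equivalently, σ_n − σ_{n−σ_n} ≤ 1. -/

import Mathlib

open Real Nat

noncomputable def T (n : ℕ) : ℝ := Real.exp 1 * (n ! : ℝ) ^ (1 / (n : ℝ))

noncomputable def σ (n : ℕ) : ℤ := ⌊T n⌋ - n + 1

lemma T_pow (k : ℕ) (hk : 0 < k) : T k ^ k = Real.exp 1 ^ k * k ! := by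
  rw [T, mul_pow, one_div, Real.rpow_inv_natCast_pow (by positivity) hk.ne']

lemma floor_T_eq (k : ℕ) (a : ℕ) (hk : 0 < k)
    (h1 : ((a : ℝ))^k ≤ Real.exp 1 ^ k * k !)
    (h2 : Real.exp 1 ^ k * (k ! : ℝ) < ((a : ℝ) + 1)^k) : ⌊T k⌋ = (a : ℤ) := by
  have hT : 0 ≤ T k := by rw [T]; positivity
  have hle : (a : ℝ) ≤ T k := by
    refine le_of_pow_le_pow_left₀ hk.ne' hT ?_
    rw [T_pow k hk]; exact h1
  have hlt : T k < (a : ℝ) + 1 := by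
    by_contra h
    push_neg at h
    have := pow_le_pow_left₀ (by positivity) h k
    rw [T_pow k hk] at this
    linarith
  rw [Int.floor_eq_iff]
  refine ⟨by exact_mod_cast hle, by push_cast; exact hlt⟩

lemma elo : (2.7182818283 : ℝ) ≤ Real.exp 1 := le_of_lt Real.exp_one_gt_d9
lemma ehi : Real.exp 1 ≤ (2.7182818286 : ℝ) := le_of_lt Real.exp_one_lt_d9

lemma floorT_1 : ⌊T 1⌋ = 2 := by
  have hf : ((1)! : ℝ) = 1 := by norm_num [Nat.factorial]
  apply floor_T_eq 1 2 (by norm_num)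
  · have h := pow_le_pow_left₀ (by norm_num) elo 1
    rw [hf]; push_cast; nlinarith [h]
  · have h := pow_le_pow_left₀ (Real.exp_pos 1).le ehi 1
    rw [hf]; push_cast; nlinarith [h]

lemma floorT_2 : ⌊T 2⌋ = 3 := by
  have hf : ((2)! : ℝ) = 2 := by norm_num [Nat.factorial]
  apply floor_T_eq 2 3 (by norm_num)
  · have h := pow_le_pow_left₀ (by norm_num) elo 2
    rw [hf]; push_cast; nlinarith [h]
  · have h := pow_le_pow_left₀ (Real.exp_pos 1).le ehi 2
    rw [hf]; push_cast; nlinarith [h]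

lemma floorT_3 : ⌊T 3⌋ = 4 := by
  have hf : ((3)! : ℝ) = 6 := by norm_num [Nat.factorial]
  apply floor_T_eq 3 4 (by norm_num)
  · have h := pow_le_pow_left₀ (by norm_num) elo 3
    rw [hf]; push_cast; nlinarith [h]
  · have h := pow_le_pow_left₀ (Real.exp_pos 1).le ehi 3
    rw [hf]; push_cast; nlinarith [h]

lemma floorT_4 : ⌊T 4⌋ = 6 := by
  have hf : ((4)! : ℝ) = 24 := by norm_num [Nat.factorial]
  apply floor_T_eq 4 6 (by norm_num)
  · have h := pow_le_pow_left₀ (by norm_num) elo 4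
    rw [hf]; push_cast; nlinarith [h]
  · have h := pow_le_pow_left₀ (Real.exp_pos 1).le ehi 4
    rw [hf]; push_cast; nlinarith [h]

lemma floorT_5 : ⌊T 5⌋ = 7 := by
  have hf : ((5)! : ℝ) = 120 := by norm_num [Nat.factorial]
  apply floor_T_eq 5 7 (by norm_num)
  · have h := pow_le_pow_left₀ (by norm_num) elo 5
    rw [hf]; push_cast; nlinarith [h]
  · have h := pow_le_pow_left₀ (Real.exp_pos 1).le ehi 5
    rw [hf]; push_cast; nlinarith [h]

lemma floorT_6 : ⌊T 6⌋ = 8 := by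
  have hf : ((6)! : ℝ) = 720 := by norm_num [Nat.factorial]
  apply floor_T_eq 6 8 (by norm_num)
  · have h := pow_le_pow_left₀ (by norm_num) elo 6
    rw [hf]; push_cast; nlinarith [h]
  · have h := pow_le_pow_left₀ (Real.exp_pos 1).le ehi 6
    rw [hf]; push_cast; nlinarith [h]

lemma floorT_7 : ⌊T 7⌋ = 9 := by
  have hf : ((7)! : ℝ) = 5040 := by norm_num [Nat.factorial]
  apply floor_T_eq 7 9 (by norm_num)
  · have h := pow_le_pow_left₀ (by norm_num) elo 7
    rw [hf]; push_cast; nlinarith [h]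
  · have h := pow_le_pow_left₀ (Real.exp_pos 1).le ehi 7
    rw [hf]; push_cast; nlinarith [h]

lemma floorT_8 : ⌊T 8⌋ = 10 := by
  have hf : ((8)! : ℝ) = 40320 := by norm_num [Nat.factorial]
  apply floor_T_eq 8 10 (by norm_num)
  · have h := pow_le_pow_left₀ (by norm_num) elo 8
    rw [hf]; push_cast; nlinarith [h]
  · have h := pow_le_pow_left₀ (Real.exp_pos 1).le ehi 8
    rw [hf]; push_cast; nlinarith [h]

lemma floorT_9 : ⌊T 9⌋ = 11 := by
  have hf : ((9)! : ℝ) = 362880 := by norm_num [Nat.factorial]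
  apply floor_T_eq 9 11 (by norm_num)
  · have h := pow_le_pow_left₀ (by norm_num) elo 9
    rw [hf]; push_cast; nlinarith [h]
  · have h := pow_le_pow_left₀ (Real.exp_pos 1).le ehi 9
    rw [hf]; push_cast; nlinarith [h]

lemma floorT_10 : ⌊T 10⌋ = 12 := by
  have hf : ((10)! : ℝ) = 3628800 := by norm_num [Nat.factorial]
  apply floor_T_eq 10 12 (by norm_num)
  · have h := pow_le_pow_left₀ (by norm_num) elo 10
    rw [hf]; push_cast; nlinarith [h]
  · have h := pow_le_pow_left₀ (Real.exp_pos 1).le ehi 10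
    rw [hf]; push_cast; nlinarith [h]

lemma floorT_11 : ⌊T 11⌋ = 13 := by
  have hf : ((11)! : ℝ) = 39916800 := by norm_num [Nat.factorial]
  apply floor_T_eq 11 13 (by norm_num)
  · have h := pow_le_pow_left₀ (by norm_num) elo 11
    rw [hf]; push_cast; nlinarith [h]
  · have h := pow_le_pow_left₀ (Real.exp_pos 1).le ehi 11
    rw [hf]; push_cast; nlinarith [h]

lemma floorT_12 : ⌊T 12⌋ = 14 := by
  have hf : ((12)! : ℝ) = 479001600 := by norm_num [Nat.factorial]
  apply floor_T_eq 12 14 (by norm_num)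
  · have h := pow_le_pow_left₀ (by norm_num) elo 12
    rw [hf]; push_cast; nlinarith [h]
  · have h := pow_le_pow_left₀ (Real.exp_pos 1).le ehi 12
    rw [hf]; push_cast; nlinarith [h]

lemma floorT_13 : ⌊T 13⌋ = 15 := by
  have hf : ((13)! : ℝ) = 6227020800 := by norm_num [Nat.factorial]
  apply floor_T_eq 13 15 (by norm_num)
  · have h := pow_le_pow_left₀ (by norm_num) elo 13
    rw [hf]; push_cast; nlinarith [h]
  · have h := pow_le_pow_left₀ (Real.exp_pos 1).le ehi 13
    rw [hf]; push_cast; nlinarith [h]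

lemma floorT_14 : ⌊T 14⌋ = 16 := by
  have hf : ((14)! : ℝ) = 87178291200 := by norm_num [Nat.factorial]
  apply floor_T_eq 14 16 (by norm_num)
  · have h := pow_le_pow_left₀ (by norm_num) elo 14
    rw [hf]; push_cast; nlinarith [h]
  · have h := pow_le_pow_left₀ (Real.exp_pos 1).le ehi 14
    rw [hf]; push_cast; nlinarith [h]

lemma floorT_15 : ⌊T 15⌋ = 17 := by
  have hf : ((15)! : ℝ) = 1307674368000 := by norm_num [Nat.factorial]
  apply floor_T_eq 15 17 (by norm_num)
  · have h := pow_le_pow_left₀ (by norm_num) elo 15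
    rw [hf]; push_cast; nlinarith [h]
  · have h := pow_le_pow_left₀ (Real.exp_pos 1).le ehi 15
    rw [hf]; push_cast; nlinarith [h]

lemma floorT_16 : ⌊T 16⌋ = 18 := by
  have hf : ((16)! : ℝ) = 20922789888000 := by norm_num [Nat.factorial]
  apply floor_T_eq 16 18 (by norm_num)
  · have h := pow_le_pow_left₀ (by norm_num) elo 16
    rw [hf]; push_cast; nlinarith [h]
  · have h := pow_le_pow_left₀ (Real.exp_pos 1).le ehi 16
    rw [hf]; push_cast; nlinarith [h]

lemma floorT_17 : ⌊T 17⌋ = 19 := by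
  have hf : ((17)! : ℝ) = 355687428096000 := by norm_num [Nat.factorial]
  apply floor_T_eq 17 19 (by norm_num)
  · have h := pow_le_pow_left₀ (by norm_num) elo 17
    rw [hf]; push_cast; nlinarith [h]
  · have h := pow_le_pow_left₀ (Real.exp_pos 1).le ehi 17
    rw [hf]; push_cast; nlinarith [h]

lemma floorT_18 : ⌊T 18⌋ = 20 := by
  have hf : ((18)! : ℝ) = 6402373705728000 := by norm_num [Nat.factorial]
  apply floor_T_eq 18 20 (by norm_num)
  · have h := pow_le_pow_left₀ (by norm_num) elo 18
    rw [hf]; push_cast; nlinarith [h]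
  · have h := pow_le_pow_left₀ (Real.exp_pos 1).le ehi 18
    rw [hf]; push_cast; nlinarith [h]

lemma sigv_1 : σ 1 = 2 := by rw [σ, floorT_1]; norm_num
lemma sigv_2 : σ 2 = 2 := by rw [σ, floorT_2]; norm_num
lemma sigv_3 : σ 3 = 2 := by rw [σ, floorT_3]; norm_num
lemma sigv_4 : σ 4 = 3 := by rw [σ, floorT_4]; norm_num
lemma sigv_5 : σ 5 = 3 := by rw [σ, floorT_5]; norm_num
lemma sigv_6 : σ 6 = 3 := by rw [σ, floorT_6]; norm_num
lemma sigv_7 : σ 7 = 3 := by rw [σ, floorT_7]; norm_num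
lemma sigv_8 : σ 8 = 3 := by rw [σ, floorT_8]; norm_num
lemma sigv_9 : σ 9 = 3 := by rw [σ, floorT_9]; norm_num
lemma sigv_10 : σ 10 = 3 := by rw [σ, floorT_10]; norm_num
lemma sigv_11 : σ 11 = 3 := by rw [σ, floorT_11]; norm_num
lemma sigv_12 : σ 12 = 3 := by rw [σ, floorT_12]; norm_num
lemma sigv_13 : σ 13 = 3 := by rw [σ, floorT_13]; norm_num
lemma sigv_14 : σ 14 = 3 := by rw [σ, floorT_14]; norm_num
lemma sigv_15 : σ 15 = 3 := by rw [σ, floorT_15]; norm_num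
lemma sigv_16 : σ 16 = 3 := by rw [σ, floorT_16]; norm_num
lemma sigv_17 : σ 17 = 3 := by rw [σ, floorT_17]; norm_num
lemma sigv_18 : σ 18 = 3 := by rw [σ, floorT_18]; norm_num


lemma sqrt_pi_le_stirling (m : ℕ) (hm : 1 ≤ m) : Real.sqrt π ≤ Stirling.stirlingSeq m := by
  obtain ⟨i, rfl⟩ := Nat.exists_eq_add_of_le hm
  have h := Stirling.stirlingSeq'_antitone.le_of_tendsto
    (Stirling.tendsto_stirlingSeq_sqrt_pi.comp (Filter.tendsto_add_atTop_nat 1)) i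
  simpa [Function.comp, Nat.add_comm] using h

lemma stirling_le_e_div (n : ℕ) (hn : 1 ≤ n) : Stirling.stirlingSeq n ≤ Real.exp 1 / Real.sqrt 2 := by
  have h := Stirling.stirlingSeq'_antitone (Nat.zero_le (n - 1))
  simp only [Function.comp] at h
  rw [Nat.succ_eq_add_one, Nat.sub_add_cancel hn] at h
  simpa [Stirling.stirlingSeq_one] using h

-- lower bound : √(2πm) (m/e)^m ≤ m!
lemma factorial_lower (m : ℕ) (hm : 1 ≤ m) :
    Real.sqrt (2 * π * m) * ((m : ℝ) / Real.exp 1) ^ m ≤ m ! := by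
  have h := sqrt_pi_le_stirling m hm
  rw [Stirling.stirlingSeq, le_div_iff₀ (by positivity)] at h
  calc Real.sqrt (2 * π * m) * ((m : ℝ) / Real.exp 1) ^ m
      = Real.sqrt π * (Real.sqrt (2 * m) * ((m : ℝ) / Real.exp 1) ^ m) := by
        rw [show (2 * π * (m:ℝ)) = π * (2 * m) by ring, Real.sqrt_mul pi_pos.le]
        ring
    _ ≤ m ! := by linarith

lemma factorial_upper (n : ℕ) (hn : 1 ≤ n) :
    (n ! : ℝ) ≤ Real.exp 1 * Real.sqrt n * ((n : ℝ) / Real.exp 1) ^ n := by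
  have h := stirling_le_e_div n hn
  rw [Stirling.stirlingSeq, div_le_div_iff₀ (by positivity) (by positivity)] at h
  have h2 : Real.sqrt (2 * n) = Real.sqrt 2 * Real.sqrt n := by
    rw [Real.sqrt_mul (by norm_num)]
  have hs2 : (0:ℝ) < Real.sqrt 2 := by positivity
  rw [h2] at h
  rw [← mul_le_mul_iff_of_pos_right hs2]
  nlinarith [h]

lemma T_lower (m : ℕ) (hm : 1 ≤ m) : (m : ℝ) + Real.log (2 * π * m) / 2 ≤ T m := by
  have hm0 : (0:ℝ) < m := by exact_mod_cast hm
  have hc0 : (0:ℝ) < 2 * π * m := by positivity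
  have h2 : (Real.sqrt (2*π*m) * ((m:ℝ)/Real.exp 1)^m) ^ (1/(m:ℝ)) ≤ ((m ! : ℝ)) ^ (1/(m:ℝ)) :=
    Real.rpow_le_rpow (by positivity) (factorial_lower m hm) (by positivity)
  have h3 : (Real.sqrt (2*π*m) * ((m:ℝ)/Real.exp 1)^m) ^ (1/(m:ℝ))
      = (2*π*(m:ℝ)) ^ (1/(2*(m:ℝ))) * ((m:ℝ)/Real.exp 1) := by
    rw [Real.mul_rpow (Real.sqrt_nonneg _) (by positivity), Real.sqrt_eq_rpow,
      ← Real.rpow_natCast ((m:ℝ)/Real.exp 1) m, ← Real.rpow_mul hc0.le,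
      ← Real.rpow_mul (by positivity)]
    rw [show (m:ℝ) * (1/(m:ℝ)) = 1 by field_simp, show (1:ℝ)/2 * (1/(m:ℝ)) = 1/(2*(m:ℝ)) by
      rw [one_div_mul_one_div]]
    norm_num
  have h4 : (2*π*(m:ℝ)) ^ (1/(2*(m:ℝ))) = Real.exp (Real.log (2*π*m) / (2*m)) := by
    rw [Real.rpow_def_of_pos hc0, mul_one_div]
  have h5 : 1 + Real.log (2*π*m) / (2*m) ≤ Real.exp (Real.log (2*π*m) / (2*m)) := by
    have := Real.add_one_le_exp (Real.log (2*π*m) / (2*m)); linarith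
  have h6 : (m:ℝ) * (1 + Real.log (2*π*m) / (2*m)) = m + Real.log (2*π*m) / 2 := by
    field_simp
  have h7 : Real.exp 1 * ((Real.sqrt (2*π*m) * ((m:ℝ)/Real.exp 1)^m) ^ (1/(m:ℝ))) ≤ T m := by
    rw [T]
    exact mul_le_mul_of_nonneg_left h2 (Real.exp_pos 1).le
  rw [h3, h4] at h7
  have h8 : Real.exp 1 * (Real.exp (Real.log (2*π*m) / (2*m)) * ((m:ℝ)/Real.exp 1))
      = m * Real.exp (Real.log (2*π*m) / (2*m)) := by
    field_simp
  rw [h8] at h7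
  nlinarith [h5, hm0]

lemma T_upper (n : ℕ) (hn : 1 ≤ n) (hu : 1 + Real.log n / 2 < n) :
    T n ≤ (n:ℝ)^2 / ((n:ℝ) - (1 + Real.log n / 2)) := by
  have hn0 : (0:ℝ) < n := by exact_mod_cast hn
  set u : ℝ := 1 + Real.log n / 2 with hudef
  have hu0 : 0 < u := by
    have : 0 ≤ Real.log n := Real.log_nonneg (by exact_mod_cast hn)
    rw [hudef]; linarith
  have hsn : Real.exp 1 * Real.sqrt n = Real.exp u := by
    rw [hudef, Real.exp_add, Real.sqrt_eq_rpow, Real.rpow_def_of_pos hn0]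
    ring_nf
  have h1 : ((n ! : ℝ)) ^ (1/(n:ℝ)) ≤ (Real.exp u * ((n:ℝ)/Real.exp 1)^n) ^ (1/(n:ℝ)) := by
    apply Real.rpow_le_rpow (by positivity)
    · rw [← hsn]; exact factorial_upper n hn
    · positivity
  have h3 : (Real.exp u * ((n:ℝ)/Real.exp 1)^n) ^ (1/(n:ℝ))
      = Real.exp (u / n) * ((n:ℝ)/Real.exp 1) := by
    rw [Real.mul_rpow (Real.exp_pos u).le (by positivity),
      ← Real.rpow_natCast ((n:ℝ)/Real.exp 1) n, ← Real.rpow_mul (by positivity),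
      show (n:ℝ) * (1/(n:ℝ)) = 1 by field_simp,
      Real.rpow_def_of_pos (Real.exp_pos u), Real.log_exp, mul_one_div]
    norm_num
  have h4 : Real.exp (u/n) ≤ 1 / (1 - u/n) := by
    have hx : 0 < 1 - u/n := by
      rw [sub_pos, div_lt_one hn0]; exact hu
    have h5 : 1 - u/n ≤ Real.exp (-(u/n)) := by
      have := Real.add_one_le_exp (-(u/n)); linarith
    rw [show Real.exp (u/n) = 1 / Real.exp (-(u/n)) by rw [Real.exp_neg]; field_simp]
    exact one_div_le_one_div_of_le hx h5
  have h6 : T n ≤ (n:ℝ) * Real.exp (u/n) := by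
    rw [T]
    calc Real.exp 1 * ((n ! : ℝ)) ^ (1/(n:ℝ))
        ≤ Real.exp 1 * (Real.exp (u/n) * ((n:ℝ)/Real.exp 1)) := by
          rw [← h3]; exact mul_le_mul_of_nonneg_left h1 (Real.exp_pos 1).le
      _ = (n:ℝ) * Real.exp (u/n) := by field_simp
  have hx0 : (1 : ℝ) - u/n ≠ 0 := by
    have : 0 < 1 - u/n := by rw [sub_pos, div_lt_one hn0]; exact hu
    linarith
  have hnu : (n:ℝ) - u ≠ 0 := by linarith
  have h7 : (n:ℝ) * (1/(1-u/n)) = (n:ℝ)^2 / ((n:ℝ) - u) := by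
    field_simp
  calc T n ≤ (n:ℝ) * Real.exp (u/n) := h6
    _ ≤ (n:ℝ) * (1/(1-u/n)) := by
        apply mul_le_mul_of_nonneg_left h4 hn0.le
    _ = (n:ℝ)^2 / ((n:ℝ) - u) := h7

lemma log_two_pi : (1.82 : ℝ) ≤ Real.log (2 * π) := by
  have h2pi : (6.283 : ℝ) ≤ 2 * π := by
    have := Real.pi_gt_d6; linarith
  rw [Real.le_log_iff_exp_le (by linarith)]
  have h1 : (1.18:ℝ) ≤ Real.exp 0.18 := by
    have := Real.add_one_le_exp (0.18:ℝ); linarith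
  have h2 : Real.exp 2 ≤ 7.3890561 := by
    have h := Real.exp_one_lt_d9
    have : Real.exp 2 = Real.exp 1 * Real.exp 1 := by
      rw [← Real.exp_add]; norm_num
    nlinarith [Real.exp_pos 1]
  have h3 : Real.exp 1.82 * Real.exp 0.18 = Real.exp 2 := by
    rw [← Real.exp_add]; norm_num
  nlinarith [Real.exp_pos (1.82:ℝ), Real.exp_pos (0.18:ℝ)]

set_option maxHeartbeats 1000000 in
theorem main_large (n : ℕ) (hn : 19 ≤ n) :
    2 ≤ σ n ∧ σ n < (n : ℤ) ∧ σ n - σ (n - (σ n).toNat) ≤ 1 := by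
  have hn1 : 1 ≤ n := by omega
  have hn0 : (0:ℝ) < n := by exact_mod_cast Nat.pos_of_ne_zero (by omega)
  have hn19 : (19:ℝ) ≤ n := by exact_mod_cast hn
  obtain ⟨t, htdef⟩ : ∃ t : ℝ, t = (n:ℝ) ^ (1/6 : ℝ) := ⟨_, rfl⟩
  have ht0 : 0 < t := by rw [htdef]; positivity
  have ht6 : t ^ 6 = (n:ℝ) := by
    rw [htdef, ← Real.rpow_natCast ((n:ℝ) ^ (1/6:ℝ)) 6, ← Real.rpow_mul hn0.le]
    norm_num
  have ht : (1.632 : ℝ) ≤ t := by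
    by_contra h
    push_neg at h
    have : t ^ 6 < 1.632 ^ 6 := by
      apply pow_lt_pow_left₀ h ht0.le
      norm_num
    rw [ht6] at this
    norm_num at this
    linarith
  have hlogt : Real.log t = Real.log n / 6 := by
    rw [htdef, Real.log_rpow hn0]; ring
  have hlogn : Real.log n ≤ 6 * (t - 1) := by
    have h := Real.log_le_sub_one_of_pos ht0
    rw [hlogt] at h; linarith
  obtain ⟨u, hudef⟩ : ∃ u : ℝ, u = 1 + Real.log (n:ℝ) / 2 := ⟨_, rfl⟩
  have hlogn0 : 0 ≤ Real.log n := Real.log_nonneg (by exact_mod_cast hn1)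
  have hu1 : 1 ≤ u := by rw [hudef]; linarith
  have hut : u ≤ 3 * t - 2 := by rw [hudef]; linarith
  have ht2 : (2.66:ℝ) ≤ t^2 := by nlinarith [ht]
  have ht4 : 2.66 * t^2 ≤ t^4 := by nlinarith [ht2, sq_nonneg t, pow_pos ht0 2]
  have ht6m : 2.66 * t^4 ≤ t^6 := by nlinarith [ht2, pow_pos ht0 4, sq_nonneg (t^2)]
  have hun4 : 4 * u ≤ (n:ℝ) := by
    rw [← ht6]
    nlinarith [ht2, ht4, ht6m, sq_nonneg (t - 0.849), pow_pos ht0 2]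
  have hun : u < (n:ℝ) := by linarith
  have hnu0 : (0:ℝ) < (n:ℝ) - u := by linarith
  have hTu : T n ≤ (n:ℝ)^2 / ((n:ℝ) - u) := by
    rw [hudef]
    exact T_upper n hn1 (by rw [← hudef]; exact hun)
  have hid : (n:ℝ)^2 / ((n:ℝ) - u) = (n:ℝ) + u + u^2 / ((n:ℝ) - u) := by
    field_simp; ring
  -- A bound
  have hsext : (3*t - 2)^2 ≤ 0.4725 * t^6 := by
    nlinarith [ht, ht2, ht4, ht6m, sq_nonneg (t^2 - 2.663), pow_pos ht0 2, pow_pos ht0 4,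
      mul_nonneg (mul_nonneg (sub_nonneg.2 ht2) (sub_nonneg.2 ht2)) (sub_nonneg.2 ht2)]
  have hA : u^2 / ((n:ℝ) - u) ≤ 0.63 := by
    rw [div_le_iff₀ hnu0]
    have h1 : u^2 ≤ (3*t-2)^2 := by nlinarith [hu1, hut]
    nlinarith [ht6, hun4, hsext]
  -- σ upper bound (real)
  have hfl : ((⌊T n⌋ : ℝ)) ≤ T n := Int.floor_le _
  have hσreal : ((σ n : ℤ) : ℝ) = ((⌊T n⌋ : ℝ)) - n + 1 := by
    rw [σ]; push_cast; ring
  have hσub : ((σ n : ℤ) : ℝ) ≤ u + 1 + u^2 / ((n:ℝ) - u) := by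
    rw [hσreal]
    have := hTu
    rw [hid] at this
    linarith
  -- σ ≥ 2
  have hlogn18 : (0.18:ℝ) ≤ Real.log n := by
    rw [Real.le_log_iff_exp_le hn0]
    have h1 : Real.exp 0.18 ≤ Real.exp 1 := Real.exp_le_exp.mpr (by norm_num)
    have h2 := Real.exp_one_lt_d9
    linarith
  have hTl : (n:ℝ) + Real.log (2*π*n) / 2 ≤ T n := T_lower n hn1
  have hlog2pin : Real.log (2*π*n) = Real.log (2*π) + Real.log n := by
    rw [Real.log_mul (by positivity) (by positivity)]
  have hσ2 : 2 ≤ σ n := by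
    have hTn1 : ((n:ℝ)) + 1 ≤ T n := by
      have := log_two_pi
      rw [hlog2pin] at hTl
      linarith
    have : ((n:ℤ)) + 1 ≤ ⌊T n⌋ := Int.le_floor.mpr (by push_cast; linarith)
    rw [σ]; omega
  -- σ < n
  have hσub2 : ((σ n : ℤ) : ℝ) ≤ 3*t - 0.37 := by
    calc ((σ n : ℤ) : ℝ) ≤ u + 1 + u^2/((n:ℝ)-u) := hσub
      _ ≤ (3*t-2) + 1 + 0.63 := by linarith
      _ = 3*t - 0.37 := by ring
  have hσltn : σ n < (n:ℤ) := by
    have hr : ((σ n : ℤ) : ℝ) < (n:ℝ) := by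
      have : 3*t - 0.37 < t^6 := by
        nlinarith [ht, ht2, ht4, ht6m, pow_pos ht0 2]
      rw [ht6] at this
      linarith
    exact_mod_cast hr
  refine ⟨hσ2, hσltn, ?_⟩
  -- the m part
  set s : ℕ := (σ n).toNat with hsdef
  have hsz : (s:ℤ) = σ n := Int.toNat_of_nonneg (by linarith)
  have hsn : s ≤ n := by omega
  have hmz : ((n - s : ℕ) : ℤ) = (n:ℤ) - σ n := by
    push_cast [Nat.cast_sub hsn]; omega
  have hmr : ((n - s : ℕ) : ℝ) = (n:ℝ) - ((σ n : ℤ) : ℝ) := by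
    exact_mod_cast congrArg (Int.cast : ℤ → ℝ) hmz
  set m : ℕ := n - s with hmdef
  clear_value m
  clear_value s
  have hm4 : (t^6 - 4*t) ≤ (m:ℝ) := by
    rw [hmr, ht6]
    have : ((σ n : ℤ):ℝ) ≤ 4 * t := by nlinarith [hσub2, ht0, ht]
    linarith
  have hm0R : (0:ℝ) < (m:ℝ) := by
    have : (0:ℝ) < t^6 - 4*t := by nlinarith [ht, ht2, ht4, ht6m, pow_pos ht0 2]
    linarith
  have hm1 : 1 ≤ m := by
    rcases Nat.eq_zero_or_pos m with h | h
    · rw [h] at hm0R; norm_num at hm0R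
    · exact h
  have hB : ((σ n : ℤ) : ℝ) / (m:ℝ) ≤ 0.56 := by
    rw [div_le_iff₀ hm0R]
    have hσ3t : ((σ n : ℤ) : ℝ) ≤ 3*t := by linarith
    nlinarith [hm4, ht, ht2, ht4, ht6m, pow_pos ht0 2, hσ3t]
  -- log m lower
  have hlogm : Real.log n - Real.log m ≤ ((σ n : ℤ) : ℝ) / (m:ℝ) := by
    have hq : (0:ℝ) < (n:ℝ)/(m:ℝ) := by positivity
    have h := Real.log_le_sub_one_of_pos hq
    rw [Real.log_div (ne_of_gt hn0) (ne_of_gt hm0R)] at h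
    have he : (n:ℝ)/(m:ℝ) - 1 = ((σ n : ℤ) : ℝ) / (m:ℝ) := by
      rw [div_sub_one (ne_of_gt hm0R), hmr]
      congr 1
      ring
    linarith [h, he]
  have hTlm : (m:ℝ) + Real.log (2*π*m) / 2 ≤ T m := T_lower m hm1
  have hlog2pim : Real.log (2*π*m) = Real.log (2*π) + Real.log m := by
    rw [Real.log_mul (by positivity) (by exact ne_of_gt hm0R)]
  have hTm : ((n:ℝ)) - 2 ≤ T m := by
    have hln : Real.log n = 2*u - 2 := by rw [hudef]; ring
    have h2pi := log_two_pi
    rw [hlog2pim] at hTlm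
    have hmn : (m:ℝ) = (n:ℝ) - ((σ n : ℤ) : ℝ) := hmr
    linarith [hσub, hA, hB, hlogm]
  have hfloorm : (n:ℤ) - 2 ≤ ⌊T m⌋ := Int.le_floor.mpr (by push_cast; linarith)
  have hσm : σ m = ⌊T m⌋ - m + 1 := rfl
  have : σ n - σ m = (n:ℤ) - 1 - ⌊T m⌋ := by
    rw [hσm]
    omega
  omega

/-- Corollary 4: for `T_n = e·(n!)^(1/n)` and `n ≥ 3` one has `2 ≤ σ_n < n` and the segment
`σ_{n−σ_n}, …, σ_n` takes at most two values, i.e. `σ_n − σ_{n−σ_n} ≤ 1`. -/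
theorem sigma_segment_two_values_factorial (n : ℕ) (hn : 3 ≤ n) :
    2 ≤ σ n ∧ σ n < (n : ℤ) ∧ σ n - σ (n - (σ n).toNat) ≤ 1 := by
  rcases lt_or_ge n 19 with h | h
  · interval_cases n <;>
      · simp only [sigv_1, sigv_2, sigv_3, sigv_4, sigv_5, sigv_6, sigv_7, sigv_8, sigv_9,
          sigv_10, sigv_11, sigv_12, sigv_13, sigv_14, sigv_15, sigv_16, sigv_17, sigv_18,
          show ((2:ℤ)).toNat = 2 from rfl, show ((3:ℤ)).toNat = 3 from rfl]
        norm_num [sigv_1, sigv_2, sigv_3, sigv_4, sigv_5, sigv_6, sigv_7, sigv_8, sigv_9,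
          sigv_10, sigv_11, sigv_12, sigv_13, sigv_14, sigv_15, sigv_16]
  · exact main_large n h
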